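/- Let ξ ∈ ℝ and −∞ < ω_min < ω_max < ∞. The kinetic invariant domain D̃_ξ = {f ∈ D : f = 0 or ω_min ≤ ω₁(f,ξ) ≤ ω₂(f,ξ) ≤ ω_max} is a convex subset of ℝ². -/

import Mathlib

open MeasureTheory Real Set

noncomputable section

/-- J_λ = ∫_{-1}^1 (1-z²)^λ dz -/
def Jl (l : ℝ) : ℝ := ∫ z in (-1:ℝ)..1, (1 - z^2) ^ l

/-- θ = (γ-1)/2 -/
def th (γ : ℝ) : ℝ := (γ - 1) / 2

/-- λ = 1/(γ-1) - 1/2 -/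
def lam (γ : ℝ) : ℝ := 1 / (γ - 1) - 1 / 2

/-- a_γ = 2√(γκ)/(γ-1) -/
def ag (γ κ : ℝ) : ℝ := 2 * Real.sqrt (γ * κ) / (γ - 1)

/-- c_{γ,κ} = a_γ^{-2/(γ-1)} / J_λ -/
def cgk (γ κ : ℝ) : ℝ := ag γ κ ^ (-(2 / (γ - 1))) / Jl (lam γ)

/-- χ(ρ,ξ) = c_{γ,κ} (a_γ² ρ^{γ-1} - ξ²)_+^λ -/
def chi (γ κ ρ ξ : ℝ) : ℝ :=
  cgk γ κ * (max (ag γ κ ^ 2 * ρ ^ (γ - 1) - ξ ^ 2) 0) ^ lam γ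

/-- vector-valued Maxwellian -/
def Mx (γ κ ρ u ξ : ℝ) : ℝ × ℝ :=
  (chi γ κ ρ (ξ - u), ((1 - th γ) * u + th γ * ξ) * chi γ κ ρ (ξ - u))

/-- domain D = {f₀ > 0} ∪ {0} -/
def Dset : Set (ℝ × ℝ) := {f | 0 < f.1 ∨ f = 0}

/-- kinetic energy H(f,ξ) -/
def Hk (γ κ : ℝ) (f : ℝ × ℝ) (ξ : ℝ) : ℝ :=
  if f = 0 then 0 else
    th γ / (1 - th γ) * (ξ ^ 2 / 2) * f.1
      + th γ / (2 * cgk γ κ ^ (1 / lam γ)) * (f.1 ^ (1 + 1 / lam γ) / (1 + 1 / lam γ))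
      + 1 / (1 - th γ) * (1 / 2) * (f.2 ^ 2 / f.1)
      - th γ / (1 - th γ) * ξ * f.2

/-- u(f,ξ), inverse relation to f = M(ρ,u,ξ) -/
def uf (γ : ℝ) (f : ℝ × ℝ) (ξ : ℝ) : ℝ := (f.2 / f.1 - th γ * ξ) / (1 - th γ)

/-- ρ(f,ξ), inverse relation to f = M(ρ,u,ξ) -/
def rf (γ κ : ℝ) (f : ℝ × ℝ) (ξ : ℝ) : ℝ :=
  ag γ κ ^ (-(2 / (γ - 1))) *
    (((f.2 / f.1 - ξ) / (1 - th γ)) ^ 2 + (f.1 / cgk γ κ) ^ (1 / lam γ)) ^ (1 / (γ - 1))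

/-- kinetic Riemann invariant ω₁(f,ξ) -/
def om1 (γ κ : ℝ) (f : ℝ × ℝ) (ξ : ℝ) : ℝ :=
  uf γ f ξ - ag γ κ * rf γ κ f ξ ^ th γ

/-- kinetic Riemann invariant ω₂(f,ξ) -/
def om2 (γ κ : ℝ) (f : ℝ × ℝ) (ξ : ℝ) : ℝ :=
  uf γ f ξ + ag γ κ * rf γ κ f ξ ^ th γ

/-- Υ_{l}(z) = ∫_1^z (y²-1)^l dy -/
def Ups (l z : ℝ) : ℝ := ∫ y in (1:ℝ)..z, (y ^ 2 - 1) ^ l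

/-- entropy kernel Φ(ρ,u,ξ,v) -/
def Phi (γ κ ρ u ξ v : ℝ) : ℝ :=
  let w1 := u - ag γ κ * ρ ^ th γ
  let w2 := u + ag γ κ * ρ ^ th γ
  if w1 < ξ ∧ ξ < w2 ∧ w1 < v ∧ v < w2 then
    (1 - th γ) ^ 2 / th γ * (cgk γ κ / Jl (lam γ)) * |ξ - v| ^ (2 * lam γ - 1) *
      Ups (lam γ - 1) (((ξ + v) * (w1 + w2) - 2 * (w1 * w2 + ξ * v)) / ((w2 - w1) * |ξ - v|))
  else 0

/-- kinetic entropy H_S(f,ξ) -/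
def HS (γ κ : ℝ) (S : ℝ → ℝ) (f : ℝ × ℝ) (ξ : ℝ) : ℝ :=
  if f = 0 then 0 else ∫ v : ℝ, Phi γ κ (rf γ κ f ξ) (uf γ f ξ) ξ v * S v

/-- kinetic invariant domain D̃_ξ -/
def Dtil (γ κ ωmin ωmax ξ : ℝ) : Set (ℝ × ℝ) :=
  {f | f ∈ Dset ∧ (f = 0 ∨
    (ωmin ≤ om1 γ κ f ξ ∧ om1 γ κ f ξ ≤ om2 γ κ f ξ ∧ om2 γ κ f ξ ≤ ωmax))}

/-- T_S(ρ,u) (subdifferential of η_S) -/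
def TS (γ κ : ℝ) (S : ℝ → ℝ) (ρ u : ℝ) : ℝ × ℝ :=
  ((1 / Jl (lam γ)) * ∫ z in (-1:ℝ)..1, (1 - z ^ 2) ^ lam γ *
      (S (u + ag γ κ * ρ ^ th γ * z)
        + (th γ * ag γ κ * ρ ^ th γ * z - u) * deriv S (u + ag γ κ * ρ ^ th γ * z)),
   (1 / Jl (lam γ)) * ∫ z in (-1:ℝ)..1, (1 - z ^ 2) ^ lam γ *
      deriv S (u + ag γ κ * ρ ^ th γ * z))

/-- inner product on ℝ² -/
def dot (a b : ℝ × ℝ) : ℝ := a.1 * b.1 + a.2 * b.2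





-- auxiliary
def auxP (γ ξ : ℝ) (f : ℝ × ℝ) : ℝ := (f.2 - ξ * f.1) / (1 - th γ)
def auxN (γ κ ξ : ℝ) (f : ℝ × ℝ) : ℝ :=
  Real.sqrt (auxP γ ξ f ^ 2 + f.1 ^ 2 * (f.1 / cgk γ κ) ^ (1 / lam γ))

section facts
variable {γ κ : ℝ}

lemma th_pos (hγ : 1 < γ) : 0 < th γ := by rw [th]; linarith
lemma th_lt_one (hγ' : γ < 3) : th γ < 1 := by rw [th]; linarith
lemma lam_pos (hγ : 1 < γ) (hγ' : γ < 3) : 0 < lam γ := by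
  rw [lam]
  have h1 : (0:ℝ) < γ - 1 := by linarith
  have := one_div_lt_one_div_of_lt h1 (show γ - 1 < 2 by linarith)
  norm_num at this ⊢
  linarith

lemma ag_pos (hκ : 0 < κ) (hγ : 1 < γ) : 0 < ag γ κ := by
  rw [ag]
  have : 0 < Real.sqrt (γ * κ) := Real.sqrt_pos.2 (by positivity)
  have h1 : (0:ℝ) < γ - 1 := by linarith
  positivity

lemma Jl_pos (hγ : 1 < γ) (hγ' : γ < 3) : 0 < Jl (lam γ) := by
  have hl := lam_pos hγ hγ'
  have hcont : Continuous fun z : ℝ => (1 - z ^ 2) ^ lam γ :=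
    (continuous_const.sub (continuous_pow 2)).rpow_const (fun x => Or.inr hl.le)
  rw [Jl]
  apply intervalIntegral.intervalIntegral_pos_of_pos_on
    (hcont.intervalIntegrable _ _)
  · intro x hx
    apply Real.rpow_pos_of_pos
    nlinarith [hx.1, hx.2]
  · norm_num

lemma cgk_pos (hκ : 0 < κ) (hγ : 1 < γ) (hγ' : γ < 3) : 0 < cgk γ κ := by
  rw [cgk]
  exact div_pos (Real.rpow_pos_of_pos (ag_pos hκ hγ) _) (Jl_pos hγ hγ')

end facts


section key
variable {γ κ : ℝ} (ξ : ℝ)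

lemma sqB_eq (hκ : 0 < κ) (hγ : 1 < γ) (hγ' : γ < 3) (f : ℝ × ℝ) (hf : 0 < f.1) :
    ag γ κ * rf γ κ f ξ ^ th γ =
      Real.sqrt (((f.2 / f.1 - ξ) / (1 - th γ)) ^ 2 + (f.1 / cgk γ κ) ^ (1 / lam γ)) := by
  have ha := ag_pos hκ hγ
  have hc := cgk_pos hκ hγ hγ'
  have hγ1 : γ - 1 ≠ 0 := by intro h; linarith [hγ]
  set B : ℝ := ((f.2 / f.1 - ξ) / (1 - th γ)) ^ 2 + (f.1 / cgk γ κ) ^ (1 / lam γ) with hB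
  have hBpos : 0 < B := by
    have : 0 < (f.1 / cgk γ κ) ^ (1 / lam γ) :=
      Real.rpow_pos_of_pos (div_pos hf hc) _
    positivity
  have h1 : rf γ κ f ξ ^ th γ
      = (ag γ κ ^ (-(2 / (γ - 1)))) ^ th γ * (B ^ (1 / (γ - 1))) ^ th γ := by
    rw [rf, Real.mul_rpow (Real.rpow_nonneg ha.le _) (Real.rpow_nonneg hBpos.le _)]
  have e1 : (-(2 / (γ - 1))) * th γ = -1 := by rw [th]; field_simp
  have e2 : (1 / (γ - 1)) * th γ = 1 / 2 := by rw [th]; field_simp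
  have h2 : (ag γ κ ^ (-(2 / (γ - 1)))) ^ th γ = (ag γ κ)⁻¹ := by
    rw [← Real.rpow_mul ha.le, e1, Real.rpow_neg_one]
  have h3 : (B ^ (1 / (γ - 1))) ^ th γ = Real.sqrt B := by
    rw [← Real.rpow_mul hBpos.le, e2]
    exact (Real.sqrt_eq_rpow B).symm
  rw [h1, h2, h3, ← mul_assoc, mul_inv_cancel₀ ha.ne', one_mul]

lemma auxN_eq (hκ : 0 < κ) (hγ : 1 < γ) (hγ' : γ < 3) (f : ℝ × ℝ) (hf : 0 < f.1) :
    auxN γ κ ξ f = f.1 *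
      Real.sqrt (((f.2 / f.1 - ξ) / (1 - th γ)) ^ 2 + (f.1 / cgk γ κ) ^ (1 / lam γ)) := by
  have ht1 : th γ < 1 := th_lt_one hγ'
  have h1t : (1 : ℝ) - th γ ≠ 0 := by linarith
  have hP : auxP γ ξ f = f.1 * ((f.2 / f.1 - ξ) / (1 - th γ)) := by
    rw [auxP]; field_simp
  rw [auxN, hP]
  rw [show (f.1 * ((f.2 / f.1 - ξ) / (1 - th γ))) ^ 2 + f.1 ^ 2 * (f.1 / cgk γ κ) ^ (1 / lam γ)
      = f.1 ^ 2 * ((((f.2 / f.1 - ξ) / (1 - th γ))) ^ 2 + (f.1 / cgk γ κ) ^ (1 / lam γ)) by ring]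
  rw [Real.sqrt_mul (sq_nonneg _), Real.sqrt_sq hf.le]

lemma mem_iff (hκ : 0 < κ) (hγ : 1 < γ) (hγ' : γ < 3) (ωmin ωmax : ℝ) (f : ℝ × ℝ) (hf : 0 < f.1) :
    (ωmin ≤ om1 γ κ f ξ ∧ om1 γ κ f ξ ≤ om2 γ κ f ξ ∧ om2 γ κ f ξ ≤ ωmax) ↔
      (auxN γ κ ξ f - auxP γ ξ f ≤ (ξ - ωmin) * f.1 ∧
        auxN γ κ ξ f + auxP γ ξ f ≤ (ωmax - ξ) * f.1) := by
  have ht0 : 0 < th γ := th_pos hγ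
  have ht1 : th γ < 1 := th_lt_one hγ'
  have h1t : (0:ℝ) < 1 - th γ := by linarith
  set B : ℝ := ((f.2 / f.1 - ξ) / (1 - th γ)) ^ 2 + (f.1 / cgk γ κ) ^ (1 / lam γ) with hB
  have hsq := sqB_eq ξ hκ hγ hγ' f hf
  have hN := auxN_eq ξ hκ hγ hγ' f hf
  have hu : f.1 * uf γ f ξ = auxP γ ξ f + ξ * f.1 := by
    rw [uf, auxP]; field_simp; ring
  have hsqnn : 0 ≤ Real.sqrt B := Real.sqrt_nonneg _
  rw [om1, om2, hsq]
  constructor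
  · rintro ⟨H1, -, H3⟩
    have k1 : f.1 * Real.sqrt B ≤ f.1 * (uf γ f ξ - ωmin) :=
      mul_le_mul_of_nonneg_left (by linarith) hf.le
    have k3 : f.1 * Real.sqrt B ≤ f.1 * (ωmax - uf γ f ξ) :=
      mul_le_mul_of_nonneg_left (by linarith) hf.le
    constructor <;> nlinarith [hu, hN]
  · rintro ⟨H1, H3⟩
    have k1 : f.1 * Real.sqrt B ≤ f.1 * (uf γ f ξ - ωmin) := by nlinarith [hu, hN]
    have k3 : f.1 * Real.sqrt B ≤ f.1 * (ωmax - uf γ f ξ) := by nlinarith [hu, hN]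
    have k1' : Real.sqrt B ≤ uf γ f ξ - ωmin := le_of_mul_le_mul_left (by linarith [k1]) hf
    have k3' : Real.sqrt B ≤ ωmax - uf γ f ξ := le_of_mul_le_mul_left (by linarith [k3]) hf
    refine ⟨by linarith, by linarith, by linarith⟩

end key

section convex
variable {γ κ : ℝ}

lemma sqrt_triangle (x₁ y₁ x₂ y₂ : ℝ) :
    Real.sqrt ((x₁+x₂)^2+(y₁+y₂)^2) ≤ Real.sqrt (x₁^2+y₁^2) + Real.sqrt (x₂^2+y₂^2) := by
  have h := norm_add_le (⟨x₁,y₁⟩ : ℂ) ⟨x₂,y₂⟩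
  simpa [Complex.norm_def, Complex.normSq_apply, Complex.add_re, Complex.add_im, sq] using h

lemma sqrt_smul (a x y : ℝ) (ha : 0 ≤ a) :
    Real.sqrt ((a*x)^2+(a*y)^2) = a * Real.sqrt (x^2+y^2) := by
  rw [show (a*x)^2+(a*y)^2 = a^2 * (x^2+y^2) by ring, Real.sqrt_mul (sq_nonneg a),
    Real.sqrt_sq ha]

/-- the "Q" function: √(R f) as a convex power of f.1 -/
lemma R_eq_Q_sq (hκ : 0 < κ) (hγ : 1 < γ) (hγ' : γ < 3) (x : ℝ) (hx : 0 ≤ x) :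
    x ^ 2 * (x / cgk γ κ) ^ (1 / lam γ)
      = (Real.sqrt (cgk γ κ ^ (-(1 / lam γ))) * x ^ (1 + 1 / (2 * lam γ))) ^ 2 := by
  have hl := lam_pos hγ hγ'
  have hc := cgk_pos hκ hγ hγ'
  have hKsq : Real.sqrt (cgk γ κ ^ (-(1 / lam γ))) ^ 2 = cgk γ κ ^ (-(1 / lam γ)) :=
    Real.sq_sqrt (Real.rpow_nonneg hc.le _)
  rcases eq_or_lt_of_le hx with h0 | hx0
  · rw [← h0]
    rw [Real.zero_rpow (by positivity : (1:ℝ) + 1/(2*lam γ) ≠ 0)]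
    ring
  · have h1 : (x / cgk γ κ) ^ (1 / lam γ) = x ^ (1/lam γ) * cgk γ κ ^ (-(1 / lam γ)) := by
      rw [Real.div_rpow hx0.le hc.le, Real.rpow_neg hc.le, div_eq_mul_inv]
    have h2 : (x ^ ((1:ℝ) + 1 / (2 * lam γ))) ^ 2 = x ^ 2 * x ^ (1/lam γ) := by
      rw [← Real.rpow_natCast (x ^ ((1:ℝ) + 1 / (2 * lam γ))) 2,
        ← Real.rpow_mul hx0.le, ← Real.rpow_natCast x 2, ← Real.rpow_add hx0]
      congr 1
      push_cast
      field_simp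
    rw [h1, mul_pow, hKsq, h2]
    ring

lemma auxP_linear (ξ a b : ℝ) (f g : ℝ × ℝ) :
    auxP γ ξ (a • f + b • g) = a * auxP γ ξ f + b * auxP γ ξ g := by
  simp only [auxP, Prod.smul_fst, Prod.smul_snd, Prod.fst_add, Prod.snd_add, smul_eq_mul]
  ring

lemma auxN_convex (hκ : 0 < κ) (hγ : 1 < γ) (hγ' : γ < 3) (ξ : ℝ)
    (f g : ℝ × ℝ) (hf : 0 ≤ f.1) (hg : 0 ≤ g.1)
    (a b : ℝ) (ha : 0 ≤ a) (hb : 0 ≤ b) (hab : a + b = 1) :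
    auxN γ κ ξ (a • f + b • g) ≤ a * auxN γ κ ξ f + b * auxN γ κ ξ g := by
  have hl := lam_pos hγ hγ'
  have hc := cgk_pos hκ hγ hγ'
  set K : ℝ := Real.sqrt (cgk γ κ ^ (-(1 / lam γ))) with hK
  have hK0 : 0 ≤ K := Real.sqrt_nonneg _
  set β : ℝ := 1 + 1 / (2 * lam γ) with hβ
  have hβ1 : (1:ℝ) ≤ β := by
    have : 0 < 1 / (2 * lam γ) := by positivity
    simp only [hβ]; linarith
  set Q : ℝ → ℝ := fun x => K * x ^ β with hQ
  have hQnn : ∀ x : ℝ, 0 ≤ x → 0 ≤ Q x := fun x hx =>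
    mul_nonneg hK0 (Real.rpow_nonneg hx _)
  have hQconv : ∀ x y : ℝ, 0 ≤ x → 0 ≤ y → Q (a*x + b*y) ≤ a * Q x + b * Q y := by
    intro x y hx hy
    have := (convexOn_rpow hβ1).2 (Set.mem_Ici.2 hx) (Set.mem_Ici.2 hy) ha hb hab
    simp only [smul_eq_mul] at this
    calc K * (a*x+b*y) ^ β ≤ K * (a * x ^ β + b * y ^ β) :=
          mul_le_mul_of_nonneg_left this hK0
      _ = a * (K * x ^ β) + b * (K * y ^ β) := by ring
  have hNQ : ∀ h : ℝ × ℝ, 0 ≤ h.1 →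
      auxN γ κ ξ h = Real.sqrt (auxP γ ξ h ^ 2 + Q h.1 ^ 2) := by
    intro h hh
    rw [auxN, R_eq_Q_sq hκ hγ hγ' h.1 hh]
  have hh1 : (a • f + b • g).1 = a * f.1 + b * g.1 := by
    simp [Prod.smul_fst, smul_eq_mul]
  have hhnn : 0 ≤ (a • f + b • g).1 := by
    rw [hh1]; positivity
  rw [hNQ _ hhnn, hNQ f hf, hNQ g hg, auxP_linear, hh1]
  have step1 : Real.sqrt ((a * auxP γ ξ f + b * auxP γ ξ g) ^ 2 + Q (a * f.1 + b * g.1) ^ 2)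
      ≤ Real.sqrt ((a * auxP γ ξ f + b * auxP γ ξ g) ^ 2 + (a * Q f.1 + b * Q g.1) ^ 2) := by
    apply Real.sqrt_le_sqrt
    have h1 : 0 ≤ Q (a * f.1 + b * g.1) := hQnn _ (by positivity)
    have h2 := hQconv f.1 g.1 hf hg
    nlinarith [h1, h2]
  refine step1.trans ?_
  have step2 := sqrt_triangle (a * auxP γ ξ f) (a * Q f.1) (b * auxP γ ξ g) (b * Q g.1)
  rw [sqrt_smul a _ _ ha, sqrt_smul b _ _ hb] at step2
  exact step2

lemma auxN_zero (ξ : ℝ) : auxN γ κ ξ (0 : ℝ × ℝ) = 0 := by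
  simp [auxN, auxP]

lemma auxP_zero (ξ : ℝ) : auxP γ ξ (0 : ℝ × ℝ) = 0 := by
  simp [auxP]

end convex


theorem stmt12 (γ κ : ℝ) (hκ : 0 < κ) (hγ : 1 < γ) (hγ' : γ < 3)
    (ξ ωmin ωmax : ℝ) (hω : ωmin < ωmax) :
    Convex ℝ (Dtil γ κ ωmin ωmax ξ) := by
  intro f hf g hg a b ha hb hab
  rcases ha.eq_or_lt with rfl | ha0
  · norm_num at hab; subst hab; simpa using hg
  rcases hb.eq_or_lt with rfl | hb0
  · norm_num at hab; subst hab; simpa using hf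
  have hcond : ∀ p : ℝ × ℝ, p ∈ Dtil γ κ ωmin ωmax ξ →
      0 ≤ p.1 ∧ auxN γ κ ξ p - auxP γ ξ p ≤ (ξ - ωmin) * p.1 ∧
        auxN γ κ ξ p + auxP γ ξ p ≤ (ωmax - ξ) * p.1 := by
    rintro p ⟨hD, hor⟩
    rcases hD with hp | rfl
    · have hom : ωmin ≤ om1 γ κ p ξ ∧ om1 γ κ p ξ ≤ om2 γ κ p ξ ∧ om2 γ κ p ξ ≤ ωmax := by
        rcases hor with rfl | hom
        · simp at hp
        · exact hom
      have h2 := (mem_iff ξ hκ hγ hγ' ωmin ωmax p hp).1 hom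
      exact ⟨hp.le, h2.1, h2.2⟩
    · simp [auxN_zero, auxP_zero]
  have Hf := hcond f hf
  have Hg := hcond g hg
  by_cases h0 : f = 0 ∧ g = 0
  · obtain ⟨rfl, rfl⟩ := h0
    refine ⟨?_, ?_⟩ <;> simp [Dtil, Dset, Set.mem_setOf_eq]
  have hpos : 0 < (a • f + b • g).1 := by
    have hh1 : (a • f + b • g).1 = a * f.1 + b * g.1 := by simp [smul_eq_mul]
    rw [hh1]
    rcases not_and_or.1 h0 with hf0 | hg0
    · have hfpos : 0 < f.1 := by
        rcases hf.1 with h | h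
        · exact h
        · exact absurd h hf0
      nlinarith [Hg.1]
    · have hgpos : 0 < g.1 := by
        rcases hg.1 with h | h
        · exact h
        · exact absurd h hg0
      nlinarith [Hf.1]
  have hN := auxN_convex hκ hγ hγ' ξ f g Hf.1 Hg.1 a b ha hb hab
  have hh1 : (a • f + b • g).1 = a * f.1 + b * g.1 := by simp [smul_eq_mul]
  refine ⟨Or.inl hpos, Or.inr ((mem_iff ξ hκ hγ hγ' ωmin ωmax _ hpos).2 ⟨?_, ?_⟩)⟩
  · rw [auxP_linear, hh1]
    nlinarith [mul_le_mul_of_nonneg_left Hf.2.1 ha, mul_le_mul_of_nonneg_left Hg.2.1 hb, hN]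
  · rw [auxP_linear, hh1]
    nlinarith [mul_le_mul_of_nonneg_left Hf.2.2 ha, mul_le_mul_of_nonneg_left Hg.2.2 hb, hN]
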